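/- As the interference channel gain f → ∞ (with ps, pr, h, σ² > 0 fixed), the first-hop rate under proper interference R(0) = (1/2)·log₂(1 + (2·ps·h·(pr·f+σ²) + ps²·h²)/(pr²·f² + 2·pr·f·σ² + σ⁴)) tends to 0, while under maximally improper interference R(1) = (1/2)·log₂(1 + (2·ps·h·(pr·f+σ²) + ps²·h²)/(2·pr·f·σ² + σ⁴)) tends to (1/2)·log₂(1 + ps·h/σ²) > 0. -/

import Mathlib

open Real Filter

/-- As `f → ∞`, the first-hop rate under proper interference tends to `0`,
while under maximally improper interference it tends to
`(1/2)·log₂(1 + ps·h/σ²) > 0`. -/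
theorem rate_high_IRI_limits
    (ps pr h σ2 : ℝ) (hps : 0 < ps) (hpr : 0 < pr) (hh : 0 < h) (hσ2 : 0 < σ2) :
    Tendsto (fun f : ℝ =>
        (1 / 2) * Real.logb 2 (1 + (2 * ps * h * (pr * f + σ2) + ps ^ 2 * h ^ 2) /
          (pr ^ 2 * f ^ 2 + 2 * pr * f * σ2 + σ2 ^ 2)))
      atTop (nhds 0) ∧
    Tendsto (fun f : ℝ =>
        (1 / 2) * Real.logb 2 (1 + (2 * ps * h * (pr * f + σ2) + ps ^ 2 * h ^ 2) /
          (2 * pr * f * σ2 + σ2 ^ 2)))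
      atTop (nhds ((1 / 2) * Real.logb 2 (1 + ps * h / σ2))) ∧
    0 < (1 / 2) * Real.logb 2 (1 + ps * h / σ2) := by
  have hg : Tendsto (fun f : ℝ => pr * f + σ2) atTop atTop :=
    tendsto_atTop_add_const_right _ σ2 (tendsto_id.const_mul_atTop hpr)
  have hgpos : ∀ᶠ f : ℝ in atTop, 0 < pr * f + σ2 := hg.eventually_gt_atTop 0
  have hfpos : ∀ᶠ f : ℝ in atTop, 0 < f := eventually_gt_atTop 0
  -- first ratio → 0
  have h1 : Tendsto (fun f : ℝ => (2 * ps * h * (pr * f + σ2) + ps ^ 2 * h ^ 2) /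
      (pr ^ 2 * f ^ 2 + 2 * pr * f * σ2 + σ2 ^ 2)) atTop (nhds 0) := by
    have hbase : Tendsto (fun f : ℝ =>
        (2 * ps * h + ps ^ 2 * h ^ 2 / (pr * f + σ2)) / (pr * f + σ2)) atTop (nhds 0) :=
      Tendsto.div_atTop (tendsto_const_nhds.add (tendsto_const_nhds.div_atTop hg)) hg
    refine hbase.congr' ?_
    filter_upwards [hgpos] with f hf
    have hsq : pr ^ 2 * f ^ 2 + 2 * pr * f * σ2 + σ2 ^ 2 = (pr * f + σ2) ^ 2 := by ring
    rw [hsq]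
    field_simp
  -- second ratio → ps*h/σ2
  have h2 : Tendsto (fun f : ℝ => (2 * ps * h * (pr * f + σ2) + ps ^ 2 * h ^ 2) /
      (2 * pr * f * σ2 + σ2 ^ 2)) atTop (nhds (ps * h / σ2)) := by
    have hnum : Tendsto (fun f : ℝ => 2 * ps * h * pr + (2 * ps * h * σ2 + ps ^ 2 * h ^ 2) / f)
        atTop (nhds (2 * ps * h * pr + 0)) :=
      tendsto_const_nhds.add (tendsto_const_nhds.div_atTop tendsto_id)
    have hden : Tendsto (fun f : ℝ => 2 * pr * σ2 + σ2 ^ 2 / f)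
        atTop (nhds (2 * pr * σ2 + 0)) :=
      tendsto_const_nhds.add (tendsto_const_nhds.div_atTop tendsto_id)
    have hlim : (2 * ps * h * pr + 0) / (2 * pr * σ2 + 0) = ps * h / σ2 := by
      field_simp
      ring
    have hbase := hnum.div hden (by positivity)
    rw [hlim] at hbase
    refine hbase.congr' ?_
    filter_upwards [hfpos] with f hf
    have hd : 0 < 2 * pr * f * σ2 + σ2 ^ 2 := by positivity
    rw [Pi.div_apply]
    field_simp
    ring
  have hlog : ContinuousAt (fun x : ℝ => (1 / 2) * Real.logb 2 (1 + x)) 0 := by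
    have : ContinuousAt (Real.logb 2) (1 + 0) := Real.continuousAt_logb (by norm_num)
    exact (continuousAt_const.mul (this.comp (continuousAt_const.add continuousAt_id)))
  have hlog2 : ContinuousAt (fun x : ℝ => (1 / 2) * Real.logb 2 (1 + x)) (ps * h / σ2) := by
    have : ContinuousAt (Real.logb 2) (1 + ps * h / σ2) :=
      Real.continuousAt_logb (by positivity)
    exact (continuousAt_const.mul (this.comp (continuousAt_const.add continuousAt_id)))
  refine ⟨?_, ?_, ?_⟩
  · have := hlog.tendsto.comp h1
    simpa [Function.comp_def] using this
  · have := hlog2.tendsto.comp h2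
    simpa [Function.comp_def] using this
  · have : 0 < Real.logb 2 (1 + ps * h / σ2) :=
      Real.logb_pos (by norm_num) (by nlinarith [mul_pos hps hh, hσ2, div_pos (mul_pos hps hh) hσ2])
    linarith
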